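/- arXiv:math/0107082 — 5 statements merged into one kernel-verified Lean document; each statement's English description precedes it below -/
import Mathlib

section
/- For every p ∈ ℕ, a ∈ ℝ, b ≠ 0, and q ∈ ℝ: ∑_{r=0}^{p} (-1)^r C(p+1, r+1) q^{p-r} B_{r+1}(a+bq) / b^{r+1} = q^{p+1} + (-1)^p B_{p+1}(a)/b^{p+1}, where B_m denotes the m-th Bernoulli polynomial. -/
open Finset

/-- The `m`-th Bernoulli polynomial, evaluated at a real number. -/
noncomputable def bernoulliPoly (m : ℕ) (x : ℝ) : ℝ :=
  Polynomial.eval x ((Polynomial.bernoulli m).map (algebraMap ℚ ℝ))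

lemma bernoulliPoly_eq (m : ℕ) (t : ℝ) :
    bernoulliPoly m t
      = ∑ i ∈ Finset.range (m + 1), ((bernoulli i : ℚ) : ℝ) * (m.choose i) * t ^ (m - i) := by
  unfold bernoulliPoly
  rw [Polynomial.bernoulli, Polynomial.map_sum, Polynomial.eval_finset_sum]
  refine Finset.sum_congr rfl fun i _ => ?_
  rw [Polynomial.map_monomial, Polynomial.eval_monomial, eq_ratCast]
  push_cast
  ring

lemma bernoulliPoly_zero (x : ℝ) : bernoulliPoly 0 x = 1 := by
  simp [bernoulliPoly]

/-- Addition formula for Bernoulli polynomials. -/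
lemma bernoulliPoly_add (m : ℕ) (x y : ℝ) :
    bernoulliPoly m (x + y)
      = ∑ k ∈ Finset.range (m + 1), (m.choose k : ℝ) * bernoulliPoly k x * y ^ (m - k) := by
  have key :
      ∑ k ∈ Finset.range (m + 1), (m.choose k : ℝ) * bernoulliPoly k x * y ^ (m - k)
        = bernoulliPoly m (x + y) := by
    calc
      ∑ k ∈ Finset.range (m + 1), (m.choose k : ℝ) * bernoulliPoly k x * y ^ (m - k)
          = ∑ k ∈ Finset.Ico 0 (m + 1), ∑ i ∈ Finset.Ico 0 (k + 1),
              ((bernoulli i : ℚ) : ℝ) * (m.choose k) * (k.choose i) * x ^ (k - i)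
                * y ^ (m - k) := by
            rw [Finset.range_eq_Ico]
            refine Finset.sum_congr rfl fun k _ => ?_
            rw [bernoulliPoly_eq, ← Finset.range_eq_Ico, Finset.mul_sum, Finset.sum_mul]
            exact Finset.sum_congr rfl fun i _ => by ring
      _ = ∑ i ∈ Finset.Ico 0 (m + 1), ∑ k ∈ Finset.Ico i (m + 1),
              ((bernoulli i : ℚ) : ℝ) * (m.choose k) * (k.choose i) * x ^ (k - i)
                * y ^ (m - k) :=
            (Finset.sum_Ico_Ico_comm 0 (m + 1) _).symm
      _ = ∑ i ∈ Finset.range (m + 1),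
              ((bernoulli i : ℚ) : ℝ) * (m.choose i) * (x + y) ^ (m - i) := by
            rw [← Finset.range_eq_Ico]
            refine Finset.sum_congr rfl fun i hi => ?_
            rw [Finset.mem_range, Nat.lt_succ_iff] at hi
            rw [Finset.sum_Ico_eq_sum_range]
            have hmi : m + 1 - i = (m - i) + 1 := by omega
            rw [hmi, add_pow, Finset.mul_sum]
            refine Finset.sum_congr rfl fun j hj => ?_
            rw [Finset.mem_range, Nat.lt_succ_iff] at hj
            have hc : (m.choose (i + j)) * ((i + j).choose i)
                = (m.choose i) * ((m - i).choose j) := by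
              have := Nat.choose_mul (n := m) (k := i + j) (s := i) (by omega)
              simpa using this
            have hc' : ((m.choose (i + j)) : ℝ) * (((i + j).choose i) : ℝ)
                = ((m.choose i) : ℝ) * (((m - i).choose j) : ℝ) := by
              exact_mod_cast congrArg (Nat.cast (R := ℝ)) hc
            have h1 : i + j - i = j := by omega
            have h2 : m - (i + j) = (m - i) - j := by omega
            rw [h1, h2]
            calc ((bernoulli i : ℚ) : ℝ) * (m.choose (i + j)) * ((i + j).choose i)
                  * x ^ j * y ^ (m - i - j)
                = ((bernoulli i : ℚ) : ℝ) * ((m.choose (i + j) : ℝ) * ((i + j).choose i))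
                  * (x ^ j * y ^ (m - i - j)) := by ring
              _ = ((bernoulli i : ℚ) : ℝ) * ((m.choose i : ℝ) * ((m - i).choose j))
                  * (x ^ j * y ^ (m - i - j)) := by rw [hc']
              _ = ((bernoulli i : ℚ) : ℝ) * (m.choose i)
                  * (x ^ j * y ^ (m - i - j) * ((m - i).choose j)) := by ring
      _ = bernoulliPoly m (x + y) := (bernoulliPoly_eq m (x + y)).symm
  exact key.symm

lemma key_identity (p : ℕ) (x y : ℝ) :
    ∑ r ∈ Finset.range (p + 1), (-1 : ℝ) ^ r * (Nat.choose (p + 1) (r + 1)) *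
        y ^ (p - r) * bernoulliPoly (r + 1) x
      = y ^ (p + 1) + (-1 : ℝ) ^ p * bernoulliPoly (p + 1) (x - y) := by
  have hadd : bernoulliPoly (p + 1) (x - y)
      = ∑ k ∈ Finset.range (p + 2), ((p + 1).choose k : ℝ) * bernoulliPoly k x
          * (-y) ^ (p + 1 - k) := by
    have := bernoulliPoly_add (p + 1) x (-y)
    simpa [sub_eq_add_neg] using this
  rw [hadd, Finset.mul_sum, Finset.sum_range_succ' _ (p + 1)]
  simp only [Nat.choose_zero_right, bernoulliPoly_zero, Nat.cast_one, one_mul, mul_one,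
    Nat.sub_zero]
  have hneg : (-1 : ℝ) ^ p * (-y) ^ (p + 1) = -y ^ (p + 1) := by
    rw [neg_pow y (p + 1), ← mul_assoc, ← pow_add]
    have : p + (p + 1) = 2 * p + 1 := by omega
    rw [this, pow_succ, pow_mul]
    norm_num
  rw [hneg]
  have hcancel : ∀ A B : ℝ, B + (A + -B) = A := fun A B => by ring
  rw [hcancel]
  refine Finset.sum_congr rfl fun r hr => ?_
  rw [Finset.mem_range, Nat.lt_succ_iff] at hr
  have h1 : p + 1 - (r + 1) = p - r := by omega
  rw [h1, neg_pow y (p - r)]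
  have hsgn : (-1 : ℝ) ^ p * (-1 : ℝ) ^ (p - r) = (-1 : ℝ) ^ r := by
    rw [← pow_add]
    have : p + (p - r) = 2 * (p - r) + r := by omega
    rw [this, pow_add, pow_mul]
    norm_num
  calc (-1 : ℝ) ^ r * ((p + 1).choose (r + 1)) * y ^ (p - r) * bernoulliPoly (r + 1) x
      = ((-1 : ℝ) ^ p * (-1 : ℝ) ^ (p - r)) * ((p + 1).choose (r + 1)) * y ^ (p - r)
        * bernoulliPoly (r + 1) x := by rw [hsgn]
    _ = (-1 : ℝ) ^ p * (((p + 1).choose (r + 1)) * bernoulliPoly (r + 1) x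
        * ((-1 : ℝ) ^ (p - r) * y ^ (p - r))) := by ring

/-- Lemma 4.1: for `p ∈ ℕ`, `a ∈ ℝ`, `b ≠ 0`, `q ∈ ℝ`,
`∑_{r=0}^{p} (-1)^r C(p+1,r+1) q^{p-r} B_{r+1}(a+bq) / b^{r+1}
 = q^{p+1} + (-1)^p B_{p+1}(a) / b^{p+1}`. -/
theorem bernoulli_sum_identity (p : ℕ) (a b q : ℝ) (hb : b ≠ 0) :
    ∑ r ∈ Finset.range (p + 1), (-1 : ℝ) ^ r * (Nat.choose (p + 1) (r + 1)) *
        q ^ (p - r) * bernoulliPoly (r + 1) (a + b * q) / b ^ (r + 1)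
      = q ^ (p + 1) + (-1 : ℝ) ^ p * bernoulliPoly (p + 1) a / b ^ (p + 1) := by
  have hbp : (b : ℝ) ^ (p + 1) ≠ 0 := pow_ne_zero _ hb
  have hxy : (a + b * q) - b * q = a := by ring
  have key := key_identity p (a + b * q) (b * q)
  rw [hxy] at key
  have hterm : ∀ r ∈ Finset.range (p + 1),
      (-1 : ℝ) ^ r * (Nat.choose (p + 1) (r + 1)) * q ^ (p - r)
          * bernoulliPoly (r + 1) (a + b * q) / b ^ (r + 1)
        = (-1 : ℝ) ^ r * (Nat.choose (p + 1) (r + 1)) * (b * q) ^ (p - r)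
          * bernoulliPoly (r + 1) (a + b * q) / b ^ (p + 1) := by
    intro r hr
    rw [Finset.mem_range, Nat.lt_succ_iff] at hr
    have hsplit : b ^ (p + 1) = b ^ (p - r) * b ^ (r + 1) := by
      rw [← pow_add]; congr 1; omega
    rw [hsplit, mul_pow]
    have hbr : (b : ℝ) ^ (r + 1) ≠ 0 := pow_ne_zero _ hb
    have hbpr : (b : ℝ) ^ (p - r) ≠ 0 := pow_ne_zero _ hb
    field_simp
  rw [Finset.sum_congr rfl hterm, ← Finset.sum_div, key, add_div]
  congr 1
  rw [mul_pow, mul_comm (b ^ (p + 1)), mul_div_assoc, div_self hbp, mul_one]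
end

section
/- For m, n ∈ ℕ, a ∈ ℝ, b ≠ 0, the function q ↦ (n! m!/(n+m+1)!) ∑_{j=0}^{n} (-1)^j q^{n-j} b^{-(j+1)} C(m+n+1, n-j) B_{m+j+1}(a+bq) is an antiderivative of q ↦ q^n B_m(a+bq) on ℝ. -/
lemma bp_hasDerivAt (k : ℕ) (a b q : ℝ) :
    HasDerivAt (fun t : ℝ => bernoulliPoly (k + 1) (a + b * t))
      (((k : ℝ) + 1) * bernoulliPoly k (a + b * q) * b) q := by
  have h2 : HasDerivAt (fun t : ℝ => a + b * t) b q := by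
    simpa using ((hasDerivAt_id q).const_mul b).const_add a
  have h1 := (Polynomial.hasDerivAt ((Polynomial.bernoulli (k+1)).map (algebraMap ℚ ℝ)) (a + b*q)).comp q h2
  refine h1.congr_deriv (Eq.symm ?_)
  rw [Polynomial.derivative_map, Polynomial.derivative_bernoulli_add_one]
  simp [Polynomial.eval_map, bernoulliPoly]

lemma L1 (m n j : ℕ) (h : j ≤ n) :
    (m + j + 1) * Nat.choose (m + n + 1) (n - j) = (m + n + 1) * Nat.choose (m + n) (m + j) := by
  rw [Nat.choose_symm_of_eq_add (show m + n + 1 = (n - j) + (m + j + 1) by omega)]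
  rw [mul_comm]
  exact (Nat.add_one_mul_choose_eq (m + n) (m + j)).symm

lemma L2 (m n j : ℕ) (h : j ≤ n) :
    (n - j) * Nat.choose (m + n + 1) (n - j) = (m + n + 1) * Nat.choose (m + n) (m + j + 1) := by
  rcases eq_or_lt_of_le h with rfl | hlt
  · simp [Nat.choose_eq_zero_of_lt]
  · rw [Nat.choose_symm_of_eq_add (show m + n = (m + j + 1) + (n - j - 1) by omega)]
    have := Nat.add_one_mul_choose_eq (m + n) (n - j - 1)
    rw [show n - j - 1 + 1 = n - j by omega] at this
    simpa [Nat.succ_eq_add_one, mul_comm] using this.symm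

/-- The moments of the Bernoulli polynomials: the displayed finite sum is an
antiderivative of `q ↦ qⁿ B_m(a + b q)` on `ℝ`. -/
theorem bernoulli_moments (m n : ℕ) (a b : ℝ) (hb : b ≠ 0) (q : ℝ) :
    HasDerivAt (fun t : ℝ =>
        ((n.factorial : ℝ) * m.factorial / (n + m + 1).factorial) *
          ∑ j ∈ Finset.range (n + 1), (-1 : ℝ) ^ j * t ^ (n - j) / b ^ (j + 1) *
            (Nat.choose (m + n + 1) (n - j)) * bernoulliPoly (m + j + 1) (a + b * t))
      (q ^ n * bernoulliPoly m (a + b * q)) q := by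
  set c : ℝ := (n.factorial : ℝ) * m.factorial / (n + m + 1).factorial with hc
  set g : ℕ → ℝ := fun j => c * (-1 : ℝ) ^ j * (b⁻¹) ^ j * (m + n + 1) *
      (Nat.choose (m + n) (m + j)) * q ^ (n - j) * bernoulliPoly (m + j) (a + b * q) with hg
  set d : ℕ → ℝ := fun j =>
      (-1 : ℝ) ^ j * ((n - j : ℕ) * q ^ (n - j - 1)) / b ^ (j + 1) *
        (Nat.choose (m + n + 1) (n - j)) * bernoulliPoly (m + j + 1) (a + b * q) +
      (-1 : ℝ) ^ j * q ^ (n - j) / b ^ (j + 1) * (Nat.choose (m + n + 1) (n - j)) *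
        (((m + j : ℕ) : ℝ) + 1) * bernoulliPoly (m + j) (a + b * q) * b with hd
  have hterm : ∀ j ∈ Finset.range (n + 1),
      HasDerivAt (fun t : ℝ => (-1 : ℝ) ^ j * t ^ (n - j) / b ^ (j + 1) *
        (Nat.choose (m + n + 1) (n - j)) * bernoulliPoly (m + j + 1) (a + b * t)) (d j) q := by
    intro j _
    have hf : HasDerivAt (fun t : ℝ => (-1 : ℝ) ^ j * t ^ (n - j) / b ^ (j + 1) *
        (Nat.choose (m + n + 1) (n - j)))
        ((-1 : ℝ) ^ j * ((n - j : ℕ) * q ^ (n - j - 1)) / b ^ (j + 1) *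
        (Nat.choose (m + n + 1) (n - j))) q :=
      (((hasDerivAt_pow (n - j) q).const_mul ((-1 : ℝ) ^ j)).div_const (b ^ (j + 1))).mul_const _
    have := hf.mul (bp_hasDerivAt (m + j) a b q)
    rw [hd]
    refine this.congr_deriv (Eq.symm ?_)
    ring
  have hsum := (HasDerivAt.fun_sum hterm).const_mul c
  have hcoef : c * (((m : ℝ) + n + 1) * (Nat.choose (m + n) m)) = 1 := by
    have hchN : (m + n).choose m * m.factorial * n.factorial = (m + n).factorial := by
      have h := Nat.add_choose_mul_factorial_mul_factorial n m
      rw [Nat.add_comm n m] at h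
      simpa [mul_comm, mul_assoc, mul_left_comm] using h
    have hch : ((m + n).choose m : ℝ) * m.factorial * n.factorial = ((n + m).factorial : ℝ) := by
      rw [Nat.add_comm n m]; exact_mod_cast hchN
    have hfac : ((n + m + 1).factorial : ℝ) = (((n + m : ℕ) : ℝ) + 1) * (n + m).factorial := by
      exact_mod_cast Nat.factorial_succ (n + m)
    have hne : ((n + m + 1).factorial : ℝ) ≠ 0 := by
      exact_mod_cast (Nat.factorial_pos _).ne'
    rw [hc, div_mul_eq_mul_div, div_eq_one_iff_eq hne]
    push_cast at hch hfac ⊢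
    linear_combination ((n : ℝ) + m + 1) * hch - hfac
  have hbb : b * b⁻¹ = 1 := mul_inv_cancel₀ hb
  refine hsum.congr_deriv (Eq.symm ?_)
  rw [Finset.mul_sum]
  have key : ∀ j ∈ Finset.range (n + 1), c * d j = g j - g (j + 1) := by
    intro j hj
    have hjn : j ≤ n := by simpa [Nat.lt_succ_iff] using Finset.mem_range.mp hj
    have h1 : (((m : ℝ) + j + 1)) * (Nat.choose (m + n + 1) (n - j)) =
        ((m : ℝ) + n + 1) * (Nat.choose (m + n) (m + j)) := by
      exact_mod_cast congrArg (Nat.cast : ℕ → ℝ) (L1 m n j hjn)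
    have h2 : ((n : ℝ) - j) * (Nat.choose (m + n + 1) (n - j)) =
        ((m : ℝ) + n + 1) * (Nat.choose (m + n) (m + j + 1)) := by
      have := congrArg (Nat.cast : ℕ → ℝ) (L2 m n j hjn)
      push_cast [Nat.cast_sub hjn] at this
      linarith [this]
    rw [hd, hg]
    simp only [← add_assoc]
    rw [show n - (j + 1) = n - j - 1 by omega]
    simp only [div_eq_mul_inv, ← inv_pow]
    push_cast [Nat.cast_sub hjn]
    linear_combination
      (c * (-1 : ℝ) ^ j * (b⁻¹) ^ (j + 1) * q ^ (n - j - 1) * bernoulliPoly (m + j + 1) (a + b * q)) * h2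
      + (c * (-1 : ℝ) ^ j * (b⁻¹) ^ j * q ^ (n - j) * bernoulliPoly (m + j) (a + b * q)) * h1
      + (c * (-1 : ℝ) ^ j * (b⁻¹) ^ j * q ^ (n - j) * bernoulliPoly (m + j) (a + b * q) *
          ((m : ℝ) + j + 1) * (Nat.choose (m + n + 1) (n - j))) * hbb
  rw [Finset.sum_congr rfl key, Finset.sum_range_sub' g (n + 1)]
  have hgtop : g (n + 1) = 0 := by
    rw [hg]; simp [Nat.choose_eq_zero_of_lt (show m + n < m + (n + 1) by omega)]
  rw [hgtop, sub_zero, hg]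
  simp only [pow_zero, Nat.sub_zero, Nat.add_zero, mul_one, one_mul]
  linear_combination (-(q ^ n * bernoulliPoly m (a + b * q))) * hcoef
end

section
/- For m ∈ ℕ, a, b ∈ ℝ with b = 1 (or general b): the function q ↦ m! e^q (-1)^m ∑_{j=0}^{m} ((-1)^j / j!) b^{m-j} B_j(a+bq) is an antiderivative of q ↦ e^q B_m(a+bq). -/
lemma bernoulliPoly_hasDerivAt (j : ℕ) (a b q : ℝ) :
    HasDerivAt (fun t : ℝ => bernoulliPoly j (a + b * t))
      ((j : ℝ) * bernoulliPoly (j - 1) (a + b * q) * b) q := by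
  have h1 : HasDerivAt (fun t : ℝ => a + b * t) b q := by
    simpa using ((hasDerivAt_id q).const_mul b).const_add a
  have h2 := (Polynomial.hasDerivAt ((Polynomial.bernoulli j).map (algebraMap ℚ ℝ))
    (a + b * q)).comp q h1
  have hd : Polynomial.derivative ((Polynomial.bernoulli j).map (algebraMap ℚ ℝ)) =
      (j : Polynomial ℝ) * (Polynomial.bernoulli (j - 1)).map (algebraMap ℚ ℝ) := by
    rw [Polynomial.derivative_map, Polynomial.derivative_bernoulli]
    simp [Polynomial.map_mul]
  simpa [bernoulliPoly, hd, Function.comp_def, mul_comm, mul_assoc, mul_left_comm] using h2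

/-- `q ↦ m! e^q (-1)^m ∑_{j=0}^{m} ((-1)^j/j!) b^{m-j} B_j(a+bq)` is an
antiderivative of `q ↦ e^q B_m(a+bq)`. -/
theorem exp_bernoulli_antideriv (m : ℕ) (a b : ℝ) (q : ℝ) :
    HasDerivAt (fun t : ℝ =>
        (m.factorial : ℝ) * Real.exp t * (-1 : ℝ) ^ m *
          ∑ j ∈ Finset.range (m + 1), ((-1 : ℝ) ^ j / j.factorial) * b ^ (m - j) *
            bernoulliPoly j (a + b * t))
      (Real.exp q * bernoulliPoly m (a + b * q)) q := by
  set c : ℕ → ℝ := fun j => ((-1 : ℝ) ^ j / j.factorial) * b ^ (m - j) with hc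
  set S : ℝ → ℝ := fun t => ∑ j ∈ Finset.range (m + 1), c j * bernoulliPoly j (a + b * t)
    with hS
  have hSd : HasDerivAt S
      (∑ j ∈ Finset.range (m + 1), c j * ((j : ℝ) * bernoulliPoly (j - 1) (a + b * q) * b)) q :=
    HasDerivAt.fun_sum fun j _ => (bernoulliPoly_hasDerivAt j a b q).const_mul (c j)
  have hexp : HasDerivAt Real.exp (Real.exp q) q := Real.hasDerivAt_exp q
  have hmul := ((hexp.fun_mul hSd).const_mul ((m.factorial : ℝ) * (-1 : ℝ) ^ m))
  have hfeq : (fun t : ℝ => (m.factorial : ℝ) * (-1 : ℝ) ^ m * (Real.exp t * S t)) =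
      (fun t : ℝ => (m.factorial : ℝ) * Real.exp t * (-1 : ℝ) ^ m * S t) := by
    funext t; ring
  rw [hfeq] at hmul
  refine hmul.congr_deriv ?_
  symm
  -- key telescoping identity
  have key : S q + (∑ j ∈ Finset.range (m + 1),
      c j * ((j : ℝ) * bernoulliPoly (j - 1) (a + b * q) * b)) =
      c m * bernoulliPoly m (a + b * q) := by
    have hshift : (∑ j ∈ Finset.range (m + 1),
        c j * ((j : ℝ) * bernoulliPoly (j - 1) (a + b * q) * b)) =
        ∑ i ∈ Finset.range m, -(c i * bernoulliPoly i (a + b * q)) := by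
      rw [Finset.sum_range_succ']
      simp only [Nat.cast_zero, zero_mul, mul_zero, add_zero]
      refine Finset.sum_congr rfl fun i hi => ?_
      have him : i < m := Finset.mem_range.mp hi
      have hb : b ^ (m - (i + 1)) * b = b ^ (m - i) := by
        rw [← pow_succ]; congr 1; omega
      have hfac : ((i + 1).factorial : ℝ) = (i + 1) * (i.factorial : ℝ) := by
        push_cast [Nat.factorial_succ]; ring
      have hfi : (i.factorial : ℝ) ≠ 0 := Nat.cast_ne_zero.mpr i.factorial_ne_zero
      have hi1 : ((i : ℝ) + 1) ≠ 0 := by positivity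
      simp only [hc, hfac, pow_succ, Nat.add_sub_cancel, Nat.cast_add, Nat.cast_one]
      field_simp
      rw [← hb]
      ring
    rw [hshift, hS]
    simp only [Finset.sum_neg_distrib]
    rw [Finset.sum_range_succ]
    ring
  have hsum : Real.exp q * S q + Real.exp q * (∑ j ∈ Finset.range (m + 1),
      c j * ((j : ℝ) * bernoulliPoly (j - 1) (a + b * q) * b)) =
      Real.exp q * (c m * bernoulliPoly m (a + b * q)) := by
    rw [← mul_add, key]
  rw [hsum]
  have hcm : c m = (-1 : ℝ) ^ m / (m.factorial : ℝ) := by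
    simp [hc]
  rw [hcm]
  have hfm : (m.factorial : ℝ) ≠ 0 := Nat.cast_ne_zero.mpr m.factorial_ne_zero
  field_simp
  ring_nf
  rw [pow_mul']
  norm_num
end

section
/- For k ∈ ℕ with k ≥ 2, A_k(1/2) = (-1)^{k-1} B_k 2^{1-k} ln 2 - (1 - 2^{1-k}) k ζ'(1-k), where A_k(q) = k ζ'(1-k, q), B_k is the k-th Bernoulli number, and ζ' is the derivative of the Riemann zeta function. -/
open Complex

private lemma two_cpow_ne_zero (z : ℂ) : (2 : ℂ) ^ z ≠ 0 := by
  simp [Complex.cpow_eq_zero_iff]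

private lemma cpow_two_mul' (z : ℂ) (b : ℝ) (hb : 0 ≤ b) :
    (((2 * b : ℝ)) : ℂ) ^ z = (2 : ℂ) ^ z * ((b : ℝ) : ℂ) ^ z := by
  rw [Complex.ofReal_mul, mul_cpow_ofReal_nonneg (by norm_num) hb, Complex.ofReal_ofNat]

/-- series identity: ∑ 1/(n+1/2)^z = (2^z - 1) ζ(z) for 1 < re z -/
private lemma series_half (z : ℂ) (hz : 1 < z.re) :
    (∑' n : ℕ, 1 / ((n : ℂ) + ((1/2 : ℝ) : ℂ)) ^ z) = ((2:ℂ) ^ z - 1) * riemannZeta z := by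
  have hζ : riemannZeta z = ∑' n : ℕ, 1 / ((n : ℂ) + 1) ^ z := by
    simpa using zeta_eq_tsum_one_div_nat_add_one_cpow hz
  set f : ℕ → ℂ := fun n => 1 / ((n : ℂ) + 1) ^ z with hf
  have hsum : Summable f := by
    have h := Complex.summable_one_div_nat_cpow.mpr hz
    have := (summable_nat_add_iff 1).mpr h
    refine this.congr fun n => ?_
    push_cast
    ring_nf
    simp only [hf, one_div, add_comm]
  have he : Summable (fun k => f (2 * k)) :=
    hsum.comp_injective fun a b h => by omega
  have ho : Summable (fun k => f (2 * k + 1)) :=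
    hsum.comp_injective fun a b h => by omega
  have hsplit : (∑' k, f (2 * k)) + (∑' k, f (2 * k + 1)) = ∑' k, f k :=
    tsum_even_add_odd he ho
  have hodd : (∑' k, f (2 * k + 1)) = (2:ℂ) ^ (-z) * riemannZeta z := by
    rw [hζ, ← tsum_mul_left]
    congr 1 with k
    show 1 / (((2 * k + 1 : ℕ) : ℂ) + 1) ^ z = (2:ℂ) ^ (-z) * (1 / ((k : ℂ) + 1) ^ z)
    have h1 : (((2 * k + 1 : ℕ) : ℂ) + 1) = ((2 * ((k : ℝ) + 1) : ℝ) : ℂ) := by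
      push_cast; ring
    have h2 : ((((k : ℝ) + 1) : ℝ) : ℂ) = (k : ℂ) + 1 := by push_cast; ring
    rw [h1, cpow_two_mul' z _ (by positivity), h2, cpow_neg]
    simp [one_div, mul_inv, mul_comm]
  have heven : (∑' k, f (2 * k)) = (1 - (2:ℂ) ^ (-z)) * riemannZeta z := by
    have h := hsplit
    rw [hodd, ← hζ] at h
    linear_combination h
  have hL : (∑' n : ℕ, 1 / ((n : ℂ) + ((1/2 : ℝ) : ℂ)) ^ z)
      = (2:ℂ) ^ z * ∑' k, f (2 * k) := by
    rw [← tsum_mul_left]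
    congr 1 with n
    show 1 / ((n : ℂ) + ((1/2 : ℝ) : ℂ)) ^ z = (2:ℂ) ^ z * (1 / (((2 * n : ℕ) : ℂ) + 1) ^ z)
    have h1 : (((2 * n : ℕ) : ℂ) + 1) = ((2 * ((n : ℝ) + 1/2) : ℝ) : ℂ) := by
      push_cast; ring
    have h2 : ((((n : ℝ) + 1/2) : ℝ) : ℂ) = (n : ℂ) + ((1/2 : ℝ) : ℂ) := by push_cast; ring
    rw [h1, cpow_two_mul' z _ (by positivity), h2]
    rw [mul_one_div, ← div_div, div_self (two_cpow_ne_zero z)]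
  rw [hL, heven, cpow_neg]
  have h2z := two_cpow_ne_zero z
  field_simp
  try ring

/-- Let `F z q` be (any) analytic continuation in `z` of the Hurwitz zeta function
`ζ(z,q)` for each fixed `q > 0`.  For `k ≥ 2`, with `A_k(q) := k · ∂ζ/∂z(1-k, q)`,
`A_k(1/2) = (-1)^{k-1} B_k 2^{1-k} ln 2 - (1 - 2^{1-k}) k ζ'(1-k)`. -/
theorem Ak_at_half (F : ℂ → ℝ → ℂ)
    (hF : ∀ q : ℝ, 0 < q → AnalyticOn ℂ (fun z => F z q) {(1 : ℂ)}ᶜ)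
    (hFeq : ∀ z : ℂ, 1 < z.re → ∀ q : ℝ, 0 < q →
      F z q = ∑' n : ℕ, 1 / ((n : ℂ) + (q : ℂ)) ^ z)
    (k : ℕ) (hk : 2 ≤ k) :
    (k : ℂ) * deriv (fun z => F z (1 / 2)) (1 - k) =
      (-1 : ℂ) ^ (k - 1) * (bernoulli k : ℂ) * (2 : ℂ) ^ (1 - (k : ℂ)) * Real.log 2 -
        (1 - (2 : ℂ) ^ (1 - (k : ℂ))) * (k : ℂ) * deriv riemannZeta (1 - k) := by
  have hq : (0:ℝ) < 1/2 := by norm_num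
  set g : ℂ → ℂ := fun z => ((2:ℂ) ^ z - 1) * riemannZeta z with hg
  have hopen : IsOpen ({(1:ℂ)}ᶜ : Set ℂ) := isOpen_compl_singleton
  have hganal : AnalyticOnNhd ℂ g ({(1:ℂ)}ᶜ : Set ℂ) := by
    apply DifferentiableOn.analyticOnNhd _ hopen
    intro z hz
    exact (((differentiableAt_id.const_cpow (Or.inl two_ne_zero)).sub
      (differentiableAt_const 1)).mul (differentiableAt_riemannZeta hz)).differentiableWithinAt
  have hFanal : AnalyticOnNhd ℂ (fun z => F z (1/2)) ({(1:ℂ)}ᶜ : Set ℂ) :=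
    (hopen.analyticOn_iff_analyticOnNhd).mp (hF _ hq)
  have hpre : IsPreconnected ({(1:ℂ)}ᶜ : Set ℂ) := by
    have := isConnected_compl_singleton_of_one_lt_rank
      (by rw [Complex.rank_real_complex]; norm_num) (1 : ℂ)
    exact this.isPreconnected
  have h2mem : (2:ℂ) ∈ ({(1:ℂ)}ᶜ : Set ℂ) := by norm_num
  have heq : Set.EqOn (fun z => F z (1/2)) g ({(1:ℂ)}ᶜ : Set ℂ) := by
    apply hFanal.eqOn_of_preconnected_of_eventuallyEq hganal hpre h2mem
    have hU : IsOpen {z : ℂ | 1 < z.re} := isOpen_lt continuous_const continuous_re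
    have h2 : (2:ℂ) ∈ {z : ℂ | 1 < z.re} := by simp
    filter_upwards [hU.mem_nhds h2] with z hz
    rw [hFeq z hz _ hq]
    simp only [hg]
    exact series_half z hz
  have hmem : (1 - (k:ℂ)) ∈ ({(1:ℂ)}ᶜ : Set ℂ) := by
    simp only [Set.mem_compl_iff, Set.mem_singleton_iff]
    intro h
    have : (k:ℂ) = 0 := by linear_combination -h
    simp only [Nat.cast_eq_zero] at this; omega
  have hderiv : deriv (fun z => F z (1/2)) (1 - k) = deriv g (1 - k) := by
    apply Filter.EventuallyEq.deriv_eq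
    filter_upwards [hopen.mem_nhds hmem] with z hz using heq hz
  have hζd : DifferentiableAt ℂ riemannZeta (1 - (k:ℂ)) := differentiableAt_riemannZeta hmem
  have hgd : deriv g (1 - (k:ℂ)) =
      (2:ℂ) ^ (1 - (k:ℂ)) * Complex.log 2 * riemannZeta (1 - (k:ℂ))
        + ((2:ℂ) ^ (1 - (k:ℂ)) - 1) * deriv riemannZeta (1 - (k:ℂ)) := by
    have h1 : HasDerivAt (fun z : ℂ => (2:ℂ) ^ z - 1) ((2:ℂ) ^ (1 - (k:ℂ)) * Complex.log 2)
        (1 - (k:ℂ)) := by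
      simpa using ((hasStrictDerivAt_const_cpow (x := (2:ℂ))
        (Or.inl two_ne_zero)).hasDerivAt.sub_const 1)
    exact (h1.mul hζd.hasDerivAt).deriv
  have hζval : riemannZeta (1 - (k:ℂ)) = (-1:ℂ)^(k-1) * (bernoulli k : ℂ) / k := by
    have h := riemannZeta_neg_nat_eq_bernoulli (k - 1)
    have h1 : (-(((k : ℕ) - 1 : ℕ) : ℂ)) = 1 - (k:ℂ) := by
      have : ((k - 1 : ℕ) : ℂ) = (k:ℂ) - 1 := by
        push_cast [Nat.cast_sub (by omega : 1 ≤ k)]; ring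
      rw [this]; ring
    have h2 : (((k : ℕ) - 1 : ℕ) : ℂ) + 1 = (k : ℂ) := by
      push_cast [Nat.cast_sub (by omega : 1 ≤ k)]; ring
    have h3 : (k - 1) + 1 = k := by omega
    rw [h1] at h
    rw [h, h2, h3]
  have hkne : (k:ℂ) ≠ 0 := by
    simp only [Ne, Nat.cast_eq_zero]; omega
  have hlog : Complex.log 2 = (Real.log 2 : ℂ) := by
    rw [← Complex.ofReal_ofNat, Complex.ofReal_log (by norm_num)]
  rw [hderiv, hgd, hζval, hlog]
  field_simp
  ring
end

section
/- For Re z < 0, ∫₀¹ ζ(z,q) dq = 0, where ζ(z,q) is the analytic continuation of the Hurwitz zeta function. -/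
open Complex

open HurwitzZeta MeasureTheory Set Real in
private lemma F_eq_hurwitzZeta_aux (F : ℂ → ℝ → ℂ)
    (hF : ∀ q : ℝ, 0 < q → AnalyticOn ℂ (fun z => F z q) {(1 : ℂ)}ᶜ)
    (hFeq : ∀ z : ℂ, 1 < z.re → ∀ q : ℝ, 0 < q →
      F z q = ∑' n : ℕ, 1 / ((n : ℂ) + (q : ℂ)) ^ z)
    {q : ℝ} (hq : q ∈ Set.Ioc (0:ℝ) 1) {z : ℂ} (hz : z ≠ 1) :
    F z q = hurwitzZeta (↑q) z := by
  have hfa : AnalyticOnNhd ℂ (fun z => F z q) {(1:ℂ)}ᶜ :=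
    (isOpen_compl_singleton.analyticOn_iff_analyticOnNhd).mp (hF q hq.1)
  have hga : AnalyticOnNhd ℂ (hurwitzZeta (↑q)) {(1:ℂ)}ᶜ :=
    DifferentiableOn.analyticOnNhd
      (fun u hu => (differentiableAt_hurwitzZeta _ (by simpa using hu)).differentiableWithinAt)
      isOpen_compl_singleton
  have hpc : IsPreconnected ({(1:ℂ)}ᶜ : Set ℂ) :=
    (isConnected_compl_singleton_of_one_lt_rank (by simp) _).isPreconnected
  have h2 : (2:ℂ) ∈ ({(1:ℂ)}ᶜ : Set ℂ) := by norm_num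
  refine hfa.eqOn_of_preconnected_of_eventuallyEq hga hpc h2 ?_ (by simpa using hz)
  have hV : {w : ℂ | 1 < w.re} ∈ nhds (2:ℂ) :=
    (continuous_re.isOpen_preimage _ isOpen_Ioi).mem_nhds (by norm_num)
  filter_upwards [hV] with w hw
  rw [hFeq w hw q hq.1, (hasSum_hurwitzZeta_of_one_lt_re ⟨hq.1.le, hq.2⟩ hw).tsum_eq]

private lemma integral_cexp_aux {c : ℂ} (hc : c ≠ 0) (h1 : Complex.exp c = 1) :
    ∫ q in (0:ℝ)..1, Complex.exp (c * q) = 0 := by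
  rw [integral_exp_mul_complex hc]
  simp [h1]

open Real in
private lemma int1_aux {s : ℂ} (hs : s ≠ 0) (n : ℕ) :
    ∫ q in (0:ℝ)..1, Complex.exp (2 * π * I * q * n) / (n:ℂ) ^ s = 0 := by
  rcases Nat.eq_zero_or_pos n with rfl | hn
  · simp [Complex.zero_cpow hs]
  · have hc : (2 * ↑π * I * n : ℂ) ≠ 0 := by
      simp [Real.pi_ne_zero, I_ne_zero, hn.ne']
    have h1 : Complex.exp (2 * ↑π * I * n) = 1 := by
      have := Complex.exp_int_mul_two_pi_mul_I (n : ℤ)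
      rw [← this]
      push_cast
      ring_nf
    have heq : ∀ q : ℝ, Complex.exp (2 * ↑π * I * q * n) / (n:ℂ) ^ s
        = Complex.exp ((2 * ↑π * I * n) * q) * ((n:ℂ) ^ s)⁻¹ := by
      intro q
      rw [div_eq_mul_inv]
      congr 2
      ring
    simp_rw [heq]
    rw [intervalIntegral.integral_mul_const, integral_cexp_aux hc h1, zero_mul]

open Real in
private lemma int2_aux {s : ℂ} (hs : s ≠ 0) (n : ℕ) :
    ∫ q in (0:ℝ)..1, Complex.exp (2 * π * I * (-q : ℝ) * n) / (n:ℂ) ^ s = 0 := by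
  rcases Nat.eq_zero_or_pos n with rfl | hn
  · simp [Complex.zero_cpow hs]
  · have hc : (-(2 * ↑π * I * n) : ℂ) ≠ 0 := by
      simp [Real.pi_ne_zero, I_ne_zero, hn.ne']
    have h1 : Complex.exp (-(2 * ↑π * I * n)) = 1 := by
      have := Complex.exp_int_mul_two_pi_mul_I (-(n : ℤ))
      rw [← this]
      push_cast
      ring_nf
    have heq : ∀ q : ℝ, Complex.exp (2 * ↑π * I * ((-q : ℝ):ℂ) * n) / (n:ℂ) ^ s
        = Complex.exp ((-(2 * ↑π * I * n)) * q) * ((n:ℂ) ^ s)⁻¹ := by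
      intro q
      rw [div_eq_mul_inv]
      congr 2
      push_cast
      ring
    simp_rw [heq]
    rw [intervalIntegral.integral_mul_const, integral_cexp_aux hc h1, zero_mul]

/-- Let `F z q` be (any) analytic continuation in `z` of the Hurwitz zeta function
`ζ(z,q)` for each fixed `q > 0`.  For `Re z < 0`, `∫₀¹ ζ(z,q) dq = 0`. -/
theorem integral_hurwitzZeta (F : ℂ → ℝ → ℂ)
    (hF : ∀ q : ℝ, 0 < q → AnalyticOn ℂ (fun z => F z q) {(1 : ℂ)}ᶜ)
    (hFeq : ∀ z : ℂ, 1 < z.re → ∀ q : ℝ, 0 < q →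
      F z q = ∑' n : ℕ, 1 / ((n : ℂ) + (q : ℂ)) ^ z)
    (z : ℂ) (hz : z.re < 0) :
    ∫ q in (0 : ℝ)..1, F z q = 0 := by
  classical
  open HurwitzZeta MeasureTheory Set Real in
  set s : ℂ := 1 - z with hs_def
  have hs_re : 1 < s.re := by
    simp only [hs_def, sub_re, one_re]; linarith
  have hs0 : s ≠ 0 := by
    intro h; rw [h] at hs_re; simp at hs_re; linarith
  have hz1 : z ≠ 1 := by
    intro h; rw [h] at hz; norm_num [Complex.one_re] at hz
  have hsn : ∀ n : ℕ, s ≠ -(n:ℂ) := by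
    intro n h
    have : s.re = -(n:ℝ) := by rw [h]; simp
    rw [this] at hs_re
    have : (0:ℝ) ≤ n := Nat.cast_nonneg n
    linarith
  have hs1 : s ≠ 1 := by
    intro h; rw [h] at hs_re; simp at hs_re
  set A : ℂ := (2 * (π:ℂ)) ^ (-s) * Complex.Gamma s * Complex.exp (-π * I * s / 2) with hA
  set B : ℂ := (2 * (π:ℂ)) ^ (-s) * Complex.Gamma s * Complex.exp (π * I * s / 2) with hB
  set h : ℕ → ℝ → ℂ := fun n q =>
    A * (Complex.exp (2 * π * I * q * n) / (n:ℂ) ^ s)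
      + B * (Complex.exp (2 * π * I * ((-q : ℝ):ℂ) * n) / (n:ℂ) ^ s) with hh
  -- pointwise identity on (0, 1]
  have hpt : ∀ q ∈ Set.Ioc (0:ℝ) 1, F z q = ∑' n, h n q := by
    intro q hq
    have e1 := HurwitzZeta.hasSum_expZeta_of_one_lt_re q hs_re
    have e2 := HurwitzZeta.hasSum_expZeta_of_one_lt_re (-q) hs_re
    have hsum := (e1.mul_left A).add (e2.mul_left B)
    rw [F_eq_hurwitzZeta_aux F hF hFeq hq hz1]
    have hz_eq : z = 1 - s := by rw [hs_def]; ring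
    rw [hz_eq, HurwitzZeta.hurwitzZeta_one_sub _ hsn (Or.inr hs1)]
    have hcoe : ((-q : ℝ) : UnitAddCircle) = -((q : ℝ) : UnitAddCircle) := rfl
    have hsum' : HasSum (fun n => h n q)
        (A * HurwitzZeta.expZeta (↑q) s + B * HurwitzZeta.expZeta ((-q : ℝ)) s) := by
      simpa only [hh] using hsum
    rw [hsum'.tsum_eq, hcoe, hA, hB]
    ring
  have hmeas : MeasurableSet (Set.Ioc (0:ℝ) 1) := measurableSet_Ioc
  -- continuity and integrability of each term
  have hcont : ∀ n : ℕ, Continuous (h n) := by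
    intro n
    apply Continuous.add
    · exact continuous_const.mul ((Complex.continuous_exp.comp (by fun_prop)).div_const _)
    · exact continuous_const.mul ((Complex.continuous_exp.comp (by fun_prop)).div_const _)
  have hint : ∀ n : ℕ, IntegrableOn (h n) (Set.Ioc (0:ℝ) 1) := fun n =>
    (hcont n).integrableOn_Ioc
  -- norm bound
  have hbound : ∀ n : ℕ, ∀ q : ℝ, ‖h n q‖ ≤ (‖A‖ + ‖B‖) * (n:ℝ) ^ (-s.re) := by
    intro n q
    rcases Nat.eq_zero_or_pos n with rfl | hn
    · simp [hh, Complex.zero_cpow hs0]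
      positivity
    · have hnpos : (0:ℝ) < n := by exact_mod_cast hn
      have hterm : ∀ x : ℂ, x.re = 0 → ‖Complex.exp x / (n:ℂ) ^ s‖ = (n:ℝ) ^ (-s.re) := by
        intro x hx
        rw [norm_div, Complex.norm_exp, hx, Real.exp_zero,
          show ((n:ℂ)) = (((n:ℝ)):ℂ) by push_cast; rfl,
          Complex.norm_cpow_eq_rpow_re_of_pos hnpos, Real.rpow_neg hnpos.le]
        simp [one_div]
      have h1 : ‖Complex.exp (2 * (π:ℂ) * I * q * n) / (n:ℂ) ^ s‖ = (n:ℝ) ^ (-s.re) := by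
        apply hterm
        simp [Complex.mul_re, Complex.mul_im]
      have h2 : ‖Complex.exp (2 * (π:ℂ) * I * ((-q:ℝ):ℂ) * n) / (n:ℂ) ^ s‖ = (n:ℝ) ^ (-s.re) := by
        apply hterm
        simp [Complex.mul_re, Complex.mul_im]
      calc ‖h n q‖ ≤ ‖A * (Complex.exp (2 * π * I * q * n) / (n:ℂ) ^ s)‖
            + ‖B * (Complex.exp (2 * π * I * ((-q : ℝ):ℂ) * n) / (n:ℂ) ^ s)‖ := norm_add_le _ _
        _ = ‖A‖ * (n:ℝ) ^ (-s.re) + ‖B‖ * (n:ℝ) ^ (-s.re) := by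
            rw [norm_mul A, norm_mul B, h1, h2]
        _ = (‖A‖ + ‖B‖) * (n:ℝ) ^ (-s.re) := by ring
  -- summability of the integrals of the norms
  have hsummable : Summable (fun n : ℕ => ∫ q in Set.Ioc (0:ℝ) 1, ‖h n q‖) := by
    have hS : Summable (fun n : ℕ => (‖A‖ + ‖B‖) * (n:ℝ) ^ (-s.re)) :=
      (Real.summable_nat_rpow.mpr (by linarith)).mul_left _
    refine Summable.of_nonneg_of_le (fun n => integral_nonneg fun q => norm_nonneg _)
      (fun n => ?_) hS
    calc (∫ q in Set.Ioc (0:ℝ) 1, ‖h n q‖)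
        ≤ ∫ _ in Set.Ioc (0:ℝ) 1, (‖A‖ + ‖B‖) * (n:ℝ) ^ (-s.re) := by
          refine setIntegral_mono_on (hint n).norm ?_ hmeas fun q _ => hbound n q
          exact (integrableOn_const_iff).mpr (Or.inr (by simp))
      _ = (‖A‖ + ‖B‖) * (n:ℝ) ^ (-s.re) := by simp
  -- each term integrates to zero
  have hzero : ∀ n : ℕ, ∫ q in Set.Ioc (0:ℝ) 1, h n q = 0 := by
    intro n
    rw [← intervalIntegral.integral_of_le zero_le_one]
    have i1 : IntervalIntegrable (fun q : ℝ =>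
        A * (Complex.exp (2 * π * I * q * n) / (n:ℂ) ^ s)) volume 0 1 := by
      apply Continuous.intervalIntegrable
      exact continuous_const.mul ((Complex.continuous_exp.comp (by fun_prop)).div_const _)
    have i2 : IntervalIntegrable (fun q : ℝ =>
        B * (Complex.exp (2 * π * I * ((-q : ℝ):ℂ) * n) / (n:ℂ) ^ s)) volume 0 1 := by
      apply Continuous.intervalIntegrable
      exact continuous_const.mul ((Complex.continuous_exp.comp (by fun_prop)).div_const _)
    rw [hh]
    rw [intervalIntegral.integral_add i1 i2, intervalIntegral.integral_const_mul,
      intervalIntegral.integral_const_mul, int1_aux hs0 n, int2_aux hs0 n]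
    simp
  -- put everything together
  rw [intervalIntegral.integral_of_le zero_le_one,
    setIntegral_congr_fun hmeas hpt,
    ← MeasureTheory.integral_tsum_of_summable_integral_norm hint hsummable]
  simp [hzero]
end
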